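/- Let f : ℝ → ℂ be a Schwartz function. Then for every z ∈ ℂ: (1) √2 · z · (SB f)(z) = SB[u ↦ u·f(u) − f′(u)](z), and (2) z·(SB f)(z) + (d/dz)(SB f)(z) = √2 · SB[u ↦ u·f(u)](z). Equivalently, the Segal–Bargmann transform intertwines the creation operator (u − d/du)/√2 with multiplication by z, and the annihilation operator (u + d/du)/√2 with d/dz. -/

import Mathlib

open MeasureTheory Complex Filter Metric

/-- The Bargmann kernel `A(z,u) = exp(-u²/2 + √2 u z - z²/2)`. -/
noncomputable def bargmannKernel (z : ℂ) (u : ℝ) : ℂ :=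
  Complex.exp (-(u : ℂ) ^ 2 / 2 + (Real.sqrt 2 : ℂ) * (u : ℂ) * z - z ^ 2 / 2)

/-- The Segal–Bargmann transform of `f : ℝ → ℂ`. -/
noncomputable def segalBargmann (f : ℝ → ℂ) (z : ℂ) : ℂ :=
  ∫ u : ℝ, bargmannKernel z u * f u

lemma bk_continuous (z : ℂ) : Continuous (bargmannKernel z) := by
  unfold bargmannKernel; fun_prop

lemma bk_integrable_mul (z : ℂ) {g : ℝ → ℂ} (hg : AEStronglyMeasurable g volume)
    (hbdd : ∃ C, ∀ x, ‖g x‖ ≤ C) :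
    Integrable (fun u : ℝ => bargmannKernel z u * g u) := by
  have h : Integrable fun u : ℝ =>
      Complex.exp (-(1/2 : ℂ) * (u:ℂ)^2 + ((Real.sqrt 2 : ℂ) * z) * (u:ℂ) + (-(z^2)/2)) :=
    integrable_cexp_quadratic (by norm_num) _ _
  have heq : (fun u : ℝ => bargmannKernel z u * g u)
      = fun u : ℝ => g u * Complex.exp (-(1/2 : ℂ) * (u:ℂ)^2 + ((Real.sqrt 2 : ℂ) * z) * (u:ℂ) + (-(z^2)/2)) := by
    funext u
    rw [bargmannKernel]
    ring_nf
  rw [heq]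
  exact h.bdd_mul hg (c := hbdd.choose) (ae_of_all _ hbdd.choose_spec)

lemma bk_hasDerivAt_u (z : ℂ) (u : ℝ) :
    HasDerivAt (bargmannKernel z) (((Real.sqrt 2 : ℂ) * z - (u : ℂ)) * bargmannKernel z u) u := by
  have h1 : HasDerivAt (fun v : ℝ => (v : ℂ)) 1 u := by
    simpa using (hasDerivAt_id u).ofReal_comp
  have h2 : HasDerivAt
      (fun v : ℝ => -(v : ℂ) ^ 2 / 2 + (Real.sqrt 2 : ℂ) * (v : ℂ) * z - z ^ 2 / 2)
      ((Real.sqrt 2 : ℂ) * z - (u : ℂ)) u := by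
    have hb := ((((h1.mul h1).neg).div_const 2).add
      ((h1.mul_const z).const_mul (Real.sqrt 2 : ℂ))).sub_const (z ^ 2 / 2)
    convert hb using 1
    · rfl
    · funext v; simp only [Pi.add_apply, Pi.neg_apply, Pi.mul_apply]; ring
    · ring
  have h3 := h2.cexp
  have : (bargmannKernel z) = fun v : ℝ =>
      Complex.exp (-(v : ℂ) ^ 2 / 2 + (Real.sqrt 2 : ℂ) * (v : ℂ) * z - z ^ 2 / 2) := rfl
  rw [this, mul_comm]
  exact h3

lemma bk_hasDerivAt_z (z : ℂ) (u : ℝ) :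
    HasDerivAt (fun x : ℂ => bargmannKernel x u)
      (((Real.sqrt 2 : ℂ) * (u : ℂ) - z) * bargmannKernel z u) z := by
  have h2 : HasDerivAt
      (fun x : ℂ => -(u : ℂ) ^ 2 / 2 + (Real.sqrt 2 : ℂ) * (u : ℂ) * x - x ^ 2 / 2)
      ((Real.sqrt 2 : ℂ) * (u : ℂ) - z) z := by
    have hb := (((hasDerivAt_id z).const_mul ((Real.sqrt 2 : ℂ) * (u : ℂ))).const_add
      (-(u : ℂ) ^ 2 / 2)).sub (((hasDerivAt_id z).pow 2).div_const 2)
    convert hb using 1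
    · rfl
    · rfl
    · rfl
    simp only [id_eq]; push_cast; ring
  have h3 := h2.cexp
  rw [mul_comm]
  exact h3

lemma real_exp_q_integrable (b : ℝ) :
    Integrable (fun u : ℝ => Real.exp (-u ^ 2 / 2 + b * u)) := by
  have h := (integrable_cexp_quadratic (b := 1/2) (by norm_num) (b : ℂ) 0).norm
  refine h.congr ?_
  filter_upwards with x
  rw [Complex.norm_exp]
  have : (-(1/2 : ℂ) * (x:ℂ) ^ 2 + (b : ℂ) * (x:ℂ) + 0) = ((-x ^ 2 / 2 + b * x : ℝ) : ℂ) := by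
    push_cast; ring
  rw [this, Complex.ofReal_re]

lemma bk_norm (z : ℂ) (u : ℝ) :
    ‖bargmannKernel z u‖ =
      Real.exp (-u ^ 2 / 2 + Real.sqrt 2 * u * z.re - (z ^ 2).re / 2) := by
  rw [bargmannKernel, Complex.norm_exp]
  congr 1
  simp [Complex.add_re, Complex.sub_re, Complex.div_re, Complex.mul_re, Complex.normSq, ← Complex.ofReal_pow]

/-- The Segal–Bargmann transform intertwines the creation operator
`(u - d/du)/√2` with multiplication by `z`, and the annihilation operator
`(u + d/du)/√2` with `d/dz`: for a Schwartz function `f`,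
`√2 z (SB f)(z) = SB[u f - f′](z)` and
`z (SB f)(z) + (SB f)′(z) = √2 SB[u f](z)`. -/
theorem segalBargmann_intertwines (f : SchwartzMap ℝ ℂ) :
    ∀ z : ℂ,
      ((Real.sqrt 2 : ℂ) * z * segalBargmann (fun u => f u) z =
        segalBargmann (fun u : ℝ => (u : ℂ) * f u - deriv (fun v : ℝ => f v) u) z) ∧
      (z * segalBargmann (fun u => f u) z +
          deriv (segalBargmann (fun u => f u)) z =
        (Real.sqrt 2 : ℂ) * segalBargmann (fun u : ℝ => (u : ℂ) * f u) z) := by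
  intro z
  -- bounds for the Schwartz function
  set S0 : ℝ := SchwartzMap.seminorm ℝ 0 0 f with hS0def
  set S1 : ℝ := SchwartzMap.seminorm ℝ 1 0 f with hS1def
  have hC0 : ∀ x : ℝ, ‖f x‖ ≤ S0 := fun x => SchwartzMap.norm_le_seminorm ℝ f x
  have hC1 : ∀ x : ℝ, |x| * ‖f x‖ ≤ S1 := by
    intro x
    have := SchwartzMap.norm_pow_mul_le_seminorm ℝ f 1 x
    simpa [Real.norm_eq_abs] using this
  have hS0 : 0 ≤ S0 := le_trans (norm_nonneg _) (hC0 0)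
  have hS1 : 0 ≤ S1 := le_trans (by positivity) (hC1 0)
  have hCd : ∀ x : ℝ, ‖deriv f x‖ ≤ SchwartzMap.seminorm ℝ 0 0 (SchwartzMap.derivCLM ℝ ℂ f) := by
    intro x
    have := SchwartzMap.norm_le_seminorm ℝ (SchwartzMap.derivCLM ℝ ℂ f) x
    rwa [SchwartzMap.derivCLM_apply] at this
  -- integrability facts
  have int_f : Integrable (fun u : ℝ => bargmannKernel z u * f u) :=
    bk_integrable_mul z f.continuous.aestronglyMeasurable ⟨S0, hC0⟩
  have int_xf : Integrable (fun u : ℝ => bargmannKernel z u * ((u : ℂ) * f u)) := by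
    refine bk_integrable_mul z
      ((Complex.continuous_ofReal.mul f.continuous).aestronglyMeasurable) ⟨S1, fun x => ?_⟩
    rw [norm_mul, Complex.norm_real, Real.norm_eq_abs]
    exact hC1 x
  have int_df : Integrable (fun u : ℝ => bargmannKernel z u * deriv f u) := by
    refine bk_integrable_mul z
      (((f.smooth ⊤).continuous_deriv (by exact_mod_cast le_top)).aestronglyMeasurable) ⟨_, hCd⟩
  have int_u'v : Integrable (fun u : ℝ =>
      ((Real.sqrt 2 : ℂ) * z - (u : ℂ)) * bargmannKernel z u * f u) := by
    have h := bk_integrable_mul z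
      (g := fun u : ℝ => ((Real.sqrt 2 : ℂ) * z - (u : ℂ)) * f u)
      (((continuous_const.sub Complex.continuous_ofReal).mul f.continuous).aestronglyMeasurable)
      ⟨‖(Real.sqrt 2 : ℂ) * z‖ * S0 + S1, fun x => ?_⟩
    · refine h.congr ?_
      filter_upwards with u
      ring
    · calc ‖((Real.sqrt 2 : ℂ) * z - (x : ℂ)) * f x‖
          = ‖(Real.sqrt 2 : ℂ) * z * f x - (x : ℂ) * f x‖ := by ring_nf
        _ ≤ ‖(Real.sqrt 2 : ℂ) * z * f x‖ + ‖(x : ℂ) * f x‖ := norm_sub_le _ _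
        _ ≤ ‖(Real.sqrt 2 : ℂ) * z‖ * S0 + S1 := by
            have e1 : ‖(Real.sqrt 2 : ℂ) * z * f x‖ = ‖(Real.sqrt 2 : ℂ) * z‖ * ‖f x‖ :=
              norm_mul _ _
            have e2 : ‖(x : ℂ) * f x‖ = |x| * ‖f x‖ := by
              rw [norm_mul, Complex.norm_real, Real.norm_eq_abs]
            rw [e1, e2]
            exact add_le_add (mul_le_mul_of_nonneg_left (hC0 x) (norm_nonneg _)) (hC1 x)
  constructor
  · -- part 1
    have hibp : ∫ u : ℝ, bargmannKernel z u * deriv f u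
        = - ∫ u : ℝ, ((Real.sqrt 2 : ℂ) * z - (u : ℂ)) * bargmannKernel z u * f u := by
      exact integral_mul_deriv_eq_deriv_mul_of_integrable
        (fun x _ => bk_hasDerivAt_u z x) (fun x _ => f.differentiableAt.hasDerivAt)
        int_df int_u'v int_f
    have hfun : (fun v : ℝ => f v) = (⇑f : ℝ → ℂ) := rfl
    simp only [segalBargmann, hfun]
    have hsplit : (∫ u : ℝ, bargmannKernel z u * ((u : ℂ) * f u - deriv f u))
        = (∫ u : ℝ, bargmannKernel z u * ((u : ℂ) * f u))
          - ∫ u : ℝ, bargmannKernel z u * deriv f u := by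
      rw [← integral_sub int_xf int_df]
      congr 1
      funext u
      ring
    rw [hsplit, hibp, sub_neg_eq_add, ← integral_add int_xf int_u'v,
      ← integral_const_mul]
    exact integral_congr_ae (Filter.EventuallyEq.of_eq (funext fun u => by ring))
  · -- part 2
    set β : ℝ := Real.sqrt 2 * (‖z‖ + 1) with hβ
    set c : ℝ := (‖z‖ + 1) ^ 2 / 2 with hc
    set D : ℝ := Real.sqrt 2 * S1 + (‖z‖ + 1) * S0 with hD
    have hDnn : 0 ≤ D := by positivity
    have hder : HasDerivAt (fun x : ℂ => ∫ u : ℝ, bargmannKernel x u * f u)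
        (∫ u : ℝ, ((Real.sqrt 2 : ℂ) * (u : ℂ) - z) * bargmannKernel z u * f u) z := by
      have key := hasDerivAt_integral_of_dominated_loc_of_deriv_le (μ := volume)
        (F := fun (x : ℂ) (u : ℝ) => bargmannKernel x u * f u)
        (F' := fun (x : ℂ) (u : ℝ) => ((Real.sqrt 2 : ℂ) * (u : ℂ) - x) * bargmannKernel x u * f u)
        (x₀ := z) (s := ball z 1)
        (bound := fun u : ℝ => D * (Real.exp c *
          (Real.exp (-u ^ 2 / 2 + β * u) + Real.exp (-u ^ 2 / 2 + (-β) * u))))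
        (ball_mem_nhds z one_pos)
        (Eventually.of_forall fun x =>
          ((bk_continuous x).mul f.continuous).aestronglyMeasurable)
        int_f
        ((((continuous_const.mul Complex.continuous_ofReal).sub continuous_const).mul
            (bk_continuous z)).mul f.continuous).aestronglyMeasurable
        ?_ ?_ ?_
      · exact key.2
      · -- bound
        refine ae_of_all _ fun u x hx => ?_
        have hxn : ‖x‖ ≤ ‖z‖ + 1 := by
          have h1 : dist x z < 1 := mem_ball.mp hx
          have h2 : ‖x‖ - ‖z‖ ≤ ‖x - z‖ := norm_sub_norm_le x z
          rw [dist_eq_norm] at h1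
          linarith
        have hre1 : Real.sqrt 2 * u * x.re ≤ β * |u| := by
          have h1 : |x.re| ≤ ‖x‖ := by
            exact Complex.abs_re_le_norm x
          have h2 : u * x.re ≤ |u| * (‖z‖ + 1) := by
            calc u * x.re ≤ |u * x.re| := le_abs_self _
              _ = |u| * |x.re| := abs_mul _ _
              _ ≤ |u| * (‖z‖ + 1) := by
                  exact mul_le_mul_of_nonneg_left (h1.trans hxn) (abs_nonneg u)
          calc Real.sqrt 2 * u * x.re = Real.sqrt 2 * (u * x.re) := by ring
            _ ≤ Real.sqrt 2 * (|u| * (‖z‖ + 1)) :=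
                mul_le_mul_of_nonneg_left h2 (Real.sqrt_nonneg 2)
            _ = β * |u| := by rw [hβ]; ring
        have hre2 : -(x ^ 2).re / 2 ≤ c := by
          have h1 : |(x ^ 2).re| ≤ ‖x‖ ^ 2 := by
            have := Complex.abs_re_le_norm (x ^ 2)
            calc |(x ^ 2).re| ≤ ‖x ^ 2‖ := this
              _ = ‖x‖ ^ 2 := by rw [norm_pow]
          have h2 : ‖x‖ ^ 2 ≤ (‖z‖ + 1) ^ 2 := by
            apply pow_le_pow_left₀ (norm_nonneg x) hxn
          have h3 : -(x ^ 2).re ≤ |(x ^ 2).re| := neg_le_abs _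
          rw [hc]
          linarith
        have hK : ‖bargmannKernel x u‖ ≤ Real.exp (-u ^ 2 / 2 + β * |u| + c) := by
          rw [bk_norm x u]
          apply Real.exp_le_exp.mpr
          linarith
        have hsum : Real.exp (-u ^ 2 / 2 + β * |u| + c) ≤
            Real.exp c * (Real.exp (-u ^ 2 / 2 + β * u) + Real.exp (-u ^ 2 / 2 + (-β) * u)) := by
          rw [Real.exp_add]
          rcases le_or_gt 0 u with hu | hu
          · rw [_root_.abs_of_nonneg hu, mul_comm]
            exact mul_le_mul_of_nonneg_left
              (le_add_of_nonneg_right (Real.exp_pos _).le) (Real.exp_pos c).le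
          · rw [_root_.abs_of_neg hu]
            have h4 : -u ^ 2 / 2 + β * -u = -u ^ 2 / 2 + (-β) * u := by ring
            rw [h4, mul_comm]
            exact mul_le_mul_of_nonneg_left
              (le_add_of_nonneg_left (Real.exp_pos _).le) (Real.exp_pos c).le
        have hfac : ‖(Real.sqrt 2 : ℂ) * (u : ℂ) - x‖ * ‖f u‖ ≤ D := by
          have h1 : ‖(Real.sqrt 2 : ℂ) * (u : ℂ) - x‖ ≤ Real.sqrt 2 * |u| + (‖z‖ + 1) := by
            calc ‖(Real.sqrt 2 : ℂ) * (u : ℂ) - x‖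
                ≤ ‖(Real.sqrt 2 : ℂ) * (u : ℂ)‖ + ‖x‖ := norm_sub_le _ _
              _ ≤ Real.sqrt 2 * |u| + (‖z‖ + 1) := by
                  rw [norm_mul, Complex.norm_real, Complex.norm_real, Real.norm_eq_abs,
                    Real.norm_eq_abs, _root_.abs_of_nonneg (Real.sqrt_nonneg 2)]
                  exact add_le_add_right hxn _
          calc ‖(Real.sqrt 2 : ℂ) * (u : ℂ) - x‖ * ‖f u‖
              ≤ (Real.sqrt 2 * |u| + (‖z‖ + 1)) * ‖f u‖ :=
                mul_le_mul_of_nonneg_right h1 (norm_nonneg _)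
            _ ≤ D := by
                rw [hD]
                nlinarith [hC1 u, hC0 u, norm_nonneg (f u), abs_nonneg u,
                  Real.sqrt_nonneg 2, norm_nonneg z]
        calc ‖((Real.sqrt 2 : ℂ) * (u : ℂ) - x) * bargmannKernel x u * f u‖
            = (‖(Real.sqrt 2 : ℂ) * (u : ℂ) - x‖ * ‖f u‖) * ‖bargmannKernel x u‖ := by
              rw [norm_mul, norm_mul]; ring
          _ ≤ D * Real.exp (-u ^ 2 / 2 + β * |u| + c) := by
              apply mul_le_mul hfac hK (norm_nonneg _) hDnn
          _ ≤ D * (Real.exp c * (Real.exp (-u ^ 2 / 2 + β * u) + Real.exp (-u ^ 2 / 2 + (-β) * u))) :=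
              mul_le_mul_of_nonneg_left hsum hDnn
      · -- bound integrable
        exact (((real_exp_q_integrable β).add (real_exp_q_integrable (-β))).const_mul
          (Real.exp c)).const_mul D
      · -- differentiability
        exact ae_of_all _ fun u x _ => (bk_hasDerivAt_z x u).mul_const (f u)
    have hderiv_eq : deriv (segalBargmann (fun u => f u)) z
        = ∫ u : ℝ, ((Real.sqrt 2 : ℂ) * (u : ℂ) - z) * bargmannKernel z u * f u :=
      hder.deriv
    have hsplit : (∫ u : ℝ, ((Real.sqrt 2 : ℂ) * (u : ℂ) - z) * bargmannKernel z u * f u)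
        = (Real.sqrt 2 : ℂ) * (∫ u : ℝ, bargmannKernel z u * ((u : ℂ) * f u))
          - z * ∫ u : ℝ, bargmannKernel z u * f u := by
      have heq : (fun u : ℝ => ((Real.sqrt 2 : ℂ) * (u : ℂ) - z) * bargmannKernel z u * f u)
          = fun u : ℝ => (Real.sqrt 2 : ℂ) * (bargmannKernel z u * ((u : ℂ) * f u))
            - z * (bargmannKernel z u * f u) := by
        funext u; ring
      rw [heq, integral_sub (int_xf.const_mul _) (int_f.const_mul _),
        integral_const_mul, integral_const_mul]
    simp only [segalBargmann]
    rw [hderiv_eq, hsplit]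
    ring
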